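/- Define b_{m,n}(r) := (πq^{-2})^{(n-r)#r} · Σ_{s=0}^{r-1} (πq²)^{n-r+m(r-s-1)} · q^{(m-n+r-1)(n-r+s+1)+(n-r)s} · [m+s choose n-r+s+1]_{q,π} · [n-r+s choose s]_{q,π} and c_{m,n}(r) := (πq^{-2})^{(n-r)#r} · q^{(m-n+r)n+(n-r)r} · [m+r choose n]_{q,π} · [n choose r]_{q,π}, where a#r := a + (a+1) + ⋯ + (a+r-1) = ar + binom(r,2). Then c_{m,n}(r) = b_{m,n}(r) + b_{m,n}(r+1) for all m, n ∈ ℤ and r ≥ 0. -/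

import Mathlib

open scoped Classical

noncomputable section

/-- A concrete model of the ring `ℚ(q)^π := ℚ(q)[π]/(π² - 1)`: since `2` is
invertible, the Chinese Remainder Theorem (evaluating `π` at `±1`) identifies it
with `ℚ(q) × ℚ(q)`, with `q = (q, q)` and `π = (1, -1)`. -/
abbrev Rqpi : Type := RatFunc ℚ × RatFunc ℚ

/-- The element `q` of `ℚ(q)^π`. -/
def qv : Rqpi := (RatFunc.X, RatFunc.X)

/-- The element `π` of `ℚ(q)^π`. -/
def piv : Rqpi := (1, -1)

/-- The `(q,π)`-integer `[n]_{q,π} = ((πq)^n - q^{-n}) / (πq - q^{-1})`. -/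
def qint (n : ℤ) : Rqpi :=
  ((piv * qv) ^ n - qv ^ (-n)) / (piv * qv - qv ^ (-1 : ℤ))

/-- The `(q,π)`-factorial `[n]!_{q,π} = [n]_{q,π} [n-1]_{q,π} ⋯ [1]_{q,π}`. -/
def qfact (n : ℕ) : Rqpi := ∏ i ∈ Finset.range n, qint ((i : ℤ) + 1)

/-- The `(q,π)`-binomial coefficient
`[n choose r]_{q,π} = [n]_{q,π} [n-1]_{q,π} ⋯ [n-r+1]_{q,π} / [r]!_{q,π}`,
with the convention that it is `0` for `r < 0`. -/
def qbinom (n r : ℤ) : Rqpi :=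
  if r < 0 then 0
  else (∏ i ∈ Finset.range r.toNat, qint (n - (i : ℤ))) / qfact r.toNat

/-- `b_{m,n}(r)`, where `(n-r)#r = (n-r)r + binom(r,2)`. -/
def bCoeff (m n : ℤ) (r : ℕ) : Rqpi :=
  (piv * qv ^ (-2 : ℤ)) ^ ((n - (r : ℤ)) * (r : ℤ) + (r.choose 2 : ℤ)) *
    ∑ s ∈ Finset.range r,
      (piv * qv ^ 2) ^ (n - (r : ℤ) + m * ((r : ℤ) - (s : ℤ) - 1)) *
        qv ^ ((m - n + (r : ℤ) - 1) * (n - (r : ℤ) + (s : ℤ) + 1) +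
          (n - (r : ℤ)) * (s : ℤ)) *
        (qbinom (m + (s : ℤ)) (n - (r : ℤ) + (s : ℤ) + 1) *
          qbinom (n - (r : ℤ) + (s : ℤ)) (s : ℤ))

/-- `c_{m,n}(r)`. -/
def cCoeff (m n : ℤ) (r : ℕ) : Rqpi :=
  (piv * qv ^ (-2 : ℤ)) ^ ((n - (r : ℤ)) * (r : ℤ) + (r.choose 2 : ℤ)) *
    (qv ^ ((m - n + (r : ℤ)) * n + (n - (r : ℤ)) * (r : ℤ)) *
      (qbinom (m + (r : ℤ)) n * qbinom n (r : ℤ)))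




namespace S7aux

variable {K : Type*} [Field K] (e q : K)

/-- generic (q,π)-integer in a field, with `e` playing the role of `π`. -/
def gint (z : ℤ) : K := ((e * q) ^ z - q ^ (-z)) / (e * q - q ^ (-1 : ℤ))

def gfact (n : ℕ) : K := ∏ i ∈ Finset.range n, gint e q ((i : ℤ) + 1)

def gbinom (n r : ℤ) : K :=
  if r < 0 then 0
  else (∏ i ∈ Finset.range r.toNat, gint e q (n - (i : ℤ))) / gfact e q r.toNat

variable (he : e * e = 1) (hq : q ≠ 0)
  (hD : e * q - q ^ (-1 : ℤ) ≠ 0)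
  (hint : ∀ j : ℕ, gint e q ((j : ℤ) + 1) ≠ 0)

include he in
lemma he0 : e ≠ 0 := by
  intro h; rw [h, zero_mul] at he; exact zero_ne_one he

include he hq in
lemma hP0 : e * q ≠ 0 := mul_ne_zero (he0 e he) hq

include he hq hD in
lemma gint_add (x y : ℤ) :
    gint e q (x + y) = q ^ (-y) * gint e q x + (e * q) ^ x * gint e q y := by
  unfold gint
  rw [← mul_div_assoc, ← mul_div_assoc, ← add_div]
  congr 1
  rw [zpow_add₀ (hP0 e q he hq), neg_add, zpow_add₀ hq]
  ring

include hint in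
lemma gfact_ne (n : ℕ) : gfact e q n ≠ 0 :=
  Finset.prod_ne_zero_iff.2 fun i _ => hint i

lemma gbinom_ofNat (n : ℤ) (r : ℕ) :
    gbinom e q n r = (∏ i ∈ Finset.range r, gint e q (n - (i : ℤ))) / gfact e q r := by
  rw [gbinom, if_neg (by exact Int.not_lt.2 (Int.natCast_nonneg r)), Int.toNat_natCast]

lemma gbinom_neg (n : ℤ) {r : ℤ} (h : r < 0) : gbinom e q n r = 0 := if_pos h

lemma gbinom_zero (n : ℤ) : gbinom e q n (0 : ℤ) = 1 := by
  rw [gbinom, if_neg (by norm_num)]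
  simp [gfact]

include he hq hD hint in
lemma pascal (a b : ℤ) :
    gbinom e q (a + 1) b
      = q ^ (-b) * gbinom e q a b + (e * q) ^ (a + 1 - b) * gbinom e q a (b - 1) := by
  rcases lt_trichotomy b 0 with h | h | h
  · rw [gbinom_neg e q _ h, gbinom_neg e q _ h, gbinom_neg e q _ (by omega : b - 1 < 0)]
    ring
  · subst h
    rw [gbinom_neg e q _ (by omega : (0 : ℤ) - 1 < 0), gbinom_zero, gbinom_zero]
    simp
  · obtain ⟨t, rfl⟩ : ∃ t : ℕ, b = (t : ℤ) + 1 := ⟨(b - 1).toNat, by omega⟩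
    rw [show (t : ℤ) + 1 - 1 = ((t : ℕ) : ℤ) by ring,
      show (t : ℤ) + 1 = (((t + 1 : ℕ) : ℤ)) by push_cast; ring,
      gbinom_ofNat, gbinom_ofNat, gbinom_ofNat]
    have hFt : gfact e q t ≠ 0 := gfact_ne e q hint t
    have hg : gint e q ((t : ℤ) + 1) ≠ 0 := hint t
    have hFsucc : gfact e q (t + 1) = gfact e q t * gint e q ((t : ℤ) + 1) :=
      Finset.prod_range_succ _ t
    -- numerator identities
    have hnum1 : (∏ i ∈ Finset.range (t + 1), gint e q (a + 1 - (i : ℤ)))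
        = gint e q (a + 1) * ∏ i ∈ Finset.range t, gint e q (a - (i : ℤ)) := by
      rw [Finset.prod_range_succ' (fun i => gint e q (a + 1 - (i : ℤ))) t]
      simp only [Nat.cast_add, Nat.cast_one, Nat.cast_zero, sub_zero]
      rw [mul_comm]
      congr 1
      apply Finset.prod_congr rfl
      intro i _
      rw [show a + 1 - ((i : ℤ) + 1) = a - (i : ℤ) by ring]
    have hnum2 : (∏ i ∈ Finset.range (t + 1), gint e q (a - (i : ℤ)))
        = (∏ i ∈ Finset.range t, gint e q (a - (i : ℤ))) * gint e q (a - (t : ℤ)) :=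
      Finset.prod_range_succ _ t
    have hkey : gint e q (a + 1)
        = q ^ (-((t : ℤ) + 1)) * gint e q (a - (t : ℤ))
          + (e * q) ^ (a + 1 - ((t : ℤ) + 1)) * gint e q ((t : ℤ) + 1) := by
      have := gint_add e q he hq hD (a - (t : ℤ)) ((t : ℤ) + 1)
      rw [show a - (t : ℤ) + ((t : ℤ) + 1) = a + 1 by ring] at this
      rw [this, show a + 1 - ((t : ℤ) + 1) = a - (t : ℤ) by ring]
    rw [hnum1, hnum2, hFsucc, hkey]
    field_simp
    push_cast
    ring
end S7aux
namespace S7aux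

variable {K : Type*} [Field K] (e q : K)
variable (he : e * e = 1) (hq : q ≠ 0)
  (hD : e * q - q ^ (-1 : ℤ) ≠ 0)
  (hint : ∀ j : ℕ, gint e q ((j : ℤ) + 1) ≠ 0)

include he in
lemma epow_two : e ^ (2 : ℤ) = 1 := by
  rw [show (2 : ℤ) = ((2 : ℕ) : ℤ) by norm_num, zpow_natCast, pow_two, he]

include he in
lemma epow_eq {a a' : ℤ} (h : a % 2 = a' % 2) : e ^ a = e ^ a' := by
  have step : ∀ z : ℤ, e ^ z = e ^ (z % 2) := by
    intro z
    conv_lhs => rw [show z = 2 * (z / 2) + z % 2 by omega]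
    rw [zpow_add₀ (he0 e he), zpow_mul, epow_two e he, one_zpow, one_mul]
  rw [step a, step a', h]

include he hq in
lemma mono (a b a' b' c : ℤ) (hpar : a - a' = 2 * c) (hsum : a + b = a' + b') :
    (e * q) ^ a * q ^ b = (e * q) ^ a' * q ^ b' := by
  rw [mul_zpow, mul_zpow, mul_assoc, mul_assoc, ← zpow_add₀ hq, ← zpow_add₀ hq, hsum,
    epow_eq e he (by omega : a % 2 = a' % 2)]

include he hq in
lemma monoQ (a b c a' b' d : ℤ) (hpar : a - a' = 2 * d) (hsum : a + b + c = a' + b') :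
    (e * q) ^ a * q ^ b * q ^ c = (e * q) ^ a' * q ^ b' := by
  rw [mul_assoc, ← zpow_add₀ hq]
  exact mono e q he hq a (b + c) a' b' d hpar (by omega)

include he hq in
lemma monoPQ (a b c d a' b' w : ℤ) (hpar : a + c - a' = 2 * w)
    (hsum : a + b + c + d = a' + b') :
    (e * q) ^ a * q ^ b * ((e * q) ^ c * q ^ d) = (e * q) ^ a' * q ^ b' := by
  rw [show (e*q)^a * q^b * ((e*q)^c * q^d) = (e*q)^a * (e*q)^c * (q^b * q^d) by ring,
    ← zpow_add₀ (hP0 e q he hq), ← zpow_add₀ hq]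
  exact mono e q he hq (a + c) (b + d) a' b' w (by omega) (by omega)

include he hq in
lemma monoPP (a b c a' b' w : ℤ) (hpar : a + c - a' = 2 * w) (hsum : a + b + c = a' + b') :
    (e * q) ^ a * q ^ b * (e * q) ^ c = (e * q) ^ a' * q ^ b' := by
  rw [mul_right_comm, ← zpow_add₀ (hP0 e q he hq)]
  exact mono e q he hq (a + c) b a' b' w (by omega) (by omega)

include he hq in
lemma monoQQ (a b a' b' w : ℤ) (hpar : -a' = 2 * w) (hsum : a + b = a' + b') :
    q ^ a * q ^ b = (e * q) ^ a' * q ^ b' := by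
  have := mono e q he hq 0 (a + b) a' b' w (by omega) (by omega)
  rw [zpow_zero, one_mul] at this
  rw [← zpow_add₀ hq, this]

include he hq in
lemma monoQP (a c a' b' w : ℤ) (hpar : c - a' = 2 * w) (hsum : a + c = a' + b') :
    q ^ a * (e * q) ^ c = (e * q) ^ a' * q ^ b' := by
  rw [mul_comm]
  exact mono e q he hq c a a' b' w (by omega) (by omega)

include he hq in
lemma split2 (x : ℤ) : (e * q ^ 2) ^ x = (e * q) ^ x * q ^ x := by
  rw [show e * q ^ 2 = (e * q) * q by ring, mul_zpow]

include he hq in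
lemma splitm2 (x : ℤ) : (e * q ^ (-2 : ℤ)) ^ x = (e * q) ^ x * q ^ (-3 * x) := by
  have h : e * q ^ (-2 : ℤ) = (e * q) * q ^ (-3 : ℤ) := by
    rw [show (-2 : ℤ) = 1 + -3 by norm_num, zpow_add₀ hq, zpow_one]; ring
  rw [h, mul_zpow, zpow_mul]

/-- the generic `b`-coefficient -/
def gb (m n : ℤ) (r : ℕ) : K :=
  (e * q ^ (-2 : ℤ)) ^ ((n - (r : ℤ)) * (r : ℤ) + (r.choose 2 : ℤ)) *
    ∑ s ∈ Finset.range r,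
      (e * q ^ 2) ^ (n - (r : ℤ) + m * ((r : ℤ) - (s : ℤ) - 1)) *
        q ^ ((m - n + (r : ℤ) - 1) * (n - (r : ℤ) + (s : ℤ) + 1) +
          (n - (r : ℤ)) * (s : ℤ)) *
        (gbinom e q (m + (s : ℤ)) (n - (r : ℤ) + (s : ℤ) + 1) *
          gbinom e q (n - (r : ℤ) + (s : ℤ)) (s : ℤ))

/-- the generic `c`-coefficient -/
def gc (m n : ℤ) (r : ℕ) : K :=
  (e * q ^ (-2 : ℤ)) ^ ((n - (r : ℤ)) * (r : ℤ) + (r.choose 2 : ℤ)) *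
    (q ^ ((m - n + (r : ℤ)) * n + (n - (r : ℤ)) * (r : ℤ)) *
      (gbinom e q (m + (r : ℤ)) n * gbinom e q n (r : ℤ)))

/-- normalized summand of `gb r` -/
def gT (m n : ℤ) (r s : ℕ) : K :=
  (e * q) ^ (n - (r : ℤ) + m * ((r : ℤ) - (s : ℤ) - 1)) *
    q ^ ((n - (r : ℤ) + m * ((r : ℤ) - (s : ℤ) - 1)) +
      ((m - n + (r : ℤ) - 1) * (n - (r : ℤ) + (s : ℤ) + 1) + (n - (r : ℤ)) * (s : ℤ))) *
    (gbinom e q (m + (s : ℤ)) (n - (r : ℤ) + (s : ℤ) + 1) *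
      gbinom e q (n - (r : ℤ) + (s : ℤ)) (s : ℤ))

/-- normalized summand of `(e q^{-2})^{n-r-1} · gb (r+1)` -/
def gU (m n : ℤ) (r s : ℕ) : K :=
  (e * q) ^ (2 * (n - (r : ℤ) - 1) + m * ((r : ℤ) - (s : ℤ))) *
    q ^ (-3 * (n - (r : ℤ) - 1) + ((n - (r : ℤ) - 1 + m * ((r : ℤ) - (s : ℤ))) +
      ((m - n + (r : ℤ)) * (n - (r : ℤ) + (s : ℤ)) + (n - (r : ℤ) - 1) * (s : ℤ)))) *
    (gbinom e q (m + (s : ℤ)) (n - (r : ℤ) + (s : ℤ)) *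
      gbinom e q (n - (r : ℤ) - 1 + (s : ℤ)) (s : ℤ))

/-- the telescoping certificate -/
def gG (m n : ℤ) (r s : ℕ) : K :=
  (e * q) ^ (n - (r : ℤ) + m * ((r : ℤ) + (s : ℤ))) *
    q ^ (-(n - (r : ℤ)) ^ 2 + m * (n - (r : ℤ)) + m * (r : ℤ) - 2 * m * (s : ℤ)) *
    (gbinom e q (m + (s : ℤ)) (n - (r : ℤ) + (s : ℤ)) *
      gbinom e q (n - (r : ℤ) + (s : ℤ) - 1) ((s : ℤ) - 1))

include he hq in
lemma hb1 (m n : ℤ) (r : ℕ) :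
    gb e q m n r = (e * q ^ (-2 : ℤ)) ^ ((n - (r : ℤ)) * (r : ℤ) + (r.choose 2 : ℤ)) *
      ∑ s ∈ Finset.range r, gT e q m n r s := by
  unfold gb
  congr 1
  refine Finset.sum_congr rfl fun s _ => ?_
  simp only [gT]
  have s1 := split2 e q he hq (n - (r : ℤ) + m * ((r : ℤ) - (s : ℤ) - 1))
  have s2 := (zpow_add₀ hq (n - (r : ℤ) + m * ((r : ℤ) - (s : ℤ) - 1))
    ((m - n + (r : ℤ) - 1) * (n - (r : ℤ) + (s : ℤ) + 1) + (n - (r : ℤ)) * (s : ℤ))).symm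
  linear_combination (norm := ring_nf)
    (q ^ ((m - n + (r : ℤ) - 1) * (n - (r : ℤ) + (s : ℤ) + 1) + (n - (r : ℤ)) * (s : ℤ)) *
      (gbinom e q (m + (s : ℤ)) (n - (r : ℤ) + (s : ℤ) + 1) *
        gbinom e q (n - (r : ℤ) + (s : ℤ)) (s : ℤ))) * s1 +
    ((e * q) ^ (n - (r : ℤ) + m * ((r : ℤ) - (s : ℤ) - 1)) *
      (gbinom e q (m + (s : ℤ)) (n - (r : ℤ) + (s : ℤ) + 1) *
        gbinom e q (n - (r : ℤ) + (s : ℤ)) (s : ℤ))) * s2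

end S7aux
namespace S7aux

variable {K : Type*} [Field K] (e q : K)
variable (he : e * e = 1) (hq : q ≠ 0)
  (hD : e * q - q ^ (-1 : ℤ) ≠ 0)
  (hint : ∀ j : ℕ, gint e q ((j : ℤ) + 1) ≠ 0)

include he hq in
lemma hE2 : e * q ^ (-2 : ℤ) ≠ 0 := mul_ne_zero (he0 e he) (zpow_ne_zero _ hq)

lemma choose_succ_two (r : ℕ) : (r + 1).choose 2 = r.choose 2 + r := by
  have h := Nat.choose_succ_succ r 1
  simp only [Nat.choose_one_right] at h
  norm_num at h
  omega

include he hq in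
lemma hpref (n : ℤ) (r : ℕ) :
    (e * q ^ (-2 : ℤ)) ^ ((n - ((r + 1 : ℕ) : ℤ)) * ((r + 1 : ℕ) : ℤ) + (((r + 1).choose 2 : ℕ) : ℤ))
      = (e * q ^ (-2 : ℤ)) ^ ((n - (r : ℤ)) * (r : ℤ) + (r.choose 2 : ℤ)) *
        (e * q ^ (-2 : ℤ)) ^ (n - (r : ℤ) - 1) := by
  rw [← zpow_add₀ (hE2 e q he hq)]
  congr 1
  rw [choose_succ_two]
  push_cast
  ring

include he hq in
lemma hb2 (m n : ℤ) (r : ℕ) :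
    gb e q m n (r + 1) = (e * q ^ (-2 : ℤ)) ^ ((n - (r : ℤ)) * (r : ℤ) + (r.choose 2 : ℤ)) *
      ∑ s ∈ Finset.range (r + 1), gU e q m n r s := by
  unfold gb
  rw [hpref e q he hq, mul_assoc, Finset.mul_sum]
  congr 1
  refine Finset.sum_congr rfl fun s _ => ?_
  simp only [gU]
  push_cast
  have s0 := splitm2 e q he hq (n - (r : ℤ) - 1)
  have s1 := split2 e q he hq (n - ((r : ℤ) + 1) + m * (((r : ℤ) + 1) - (s : ℤ) - 1))
  have s2 := (zpow_add₀ hq (n - ((r : ℤ) + 1) + m * (((r : ℤ) + 1) - (s : ℤ) - 1))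
    ((m - n + ((r : ℤ) + 1) - 1) * (n - ((r : ℤ) + 1) + (s : ℤ) + 1) +
      (n - ((r : ℤ) + 1)) * (s : ℤ))).symm
  have s3 : ((e * q) ^ (n - (r : ℤ) - 1) * q ^ (-3 * (n - (r : ℤ) - 1))) *
      ((e * q) ^ (n - ((r : ℤ) + 1) + m * (((r : ℤ) + 1) - (s : ℤ) - 1)) *
        q ^ ((n - ((r : ℤ) + 1) + m * (((r : ℤ) + 1) - (s : ℤ) - 1)) +
          ((m - n + ((r : ℤ) + 1) - 1) * (n - ((r : ℤ) + 1) + (s : ℤ) + 1) +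
            (n - ((r : ℤ) + 1)) * (s : ℤ))))
      = (e * q) ^ (2 * (n - (r : ℤ) - 1) + m * ((r : ℤ) - (s : ℤ))) *
        q ^ (-3 * (n - (r : ℤ) - 1) + ((n - (r : ℤ) - 1 + m * ((r : ℤ) - (s : ℤ))) +
          ((m - n + (r : ℤ)) * (n - (r : ℤ) + (s : ℤ)) + (n - (r : ℤ) - 1) * (s : ℤ)))) :=
    monoPQ e q he hq _ _ _ _ _ _ 0 (by ring) (by ring)
  linear_combination (norm := ring_nf)
    ((e * q ^ 2) ^ (n - ((r : ℤ) + 1) + m * (((r : ℤ) + 1) - (s : ℤ) - 1)) *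
      q ^ ((m - n + ((r : ℤ) + 1) - 1) * (n - ((r : ℤ) + 1) + (s : ℤ) + 1) +
        (n - ((r : ℤ) + 1)) * (s : ℤ)) *
      (gbinom e q (m + (s : ℤ)) (n - (r : ℤ) + (s : ℤ)) *
        gbinom e q (n - (r : ℤ) - 1 + (s : ℤ)) (s : ℤ))) * s0 +
    ((e * q) ^ (n - (r : ℤ) - 1) * q ^ (-3 * (n - (r : ℤ) - 1)) *
      q ^ ((m - n + ((r : ℤ) + 1) - 1) * (n - ((r : ℤ) + 1) + (s : ℤ) + 1) +
        (n - ((r : ℤ) + 1)) * (s : ℤ)) *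
      (gbinom e q (m + (s : ℤ)) (n - (r : ℤ) + (s : ℤ)) *
        gbinom e q (n - (r : ℤ) - 1 + (s : ℤ)) (s : ℤ))) * s1 +
    ((e * q) ^ (n - (r : ℤ) - 1) * q ^ (-3 * (n - (r : ℤ) - 1)) *
      (e * q) ^ (n - ((r : ℤ) + 1) + m * (((r : ℤ) + 1) - (s : ℤ) - 1)) *
      (gbinom e q (m + (s : ℤ)) (n - (r : ℤ) + (s : ℤ)) *
        gbinom e q (n - (r : ℤ) - 1 + (s : ℤ)) (s : ℤ))) * s2 +
    (gbinom e q (m + (s : ℤ)) (n - (r : ℤ) + (s : ℤ)) *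
      gbinom e q (n - (r : ℤ) - 1 + (s : ℤ)) (s : ℤ)) * s3

end S7aux
namespace S7aux

variable {K : Type*} [Field K] (e q : K)
variable (he : e * e = 1) (hq : q ≠ 0)
  (hD : e * q - q ^ (-1 : ℤ) ≠ 0)
  (hint : ∀ j : ℕ, gint e q ((j : ℤ) + 1) ≠ 0)

lemma gG_zero (m n : ℤ) (r : ℕ) : gG e q m n r 0 = 0 := by
  simp only [gG, Nat.cast_zero]
  rw [gbinom_neg e q _ (by norm_num : (0 : ℤ) - 1 < 0)]
  ring

include he hq hD hint in
lemma stepI (m n : ℤ) (r s : ℕ) :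
    gG e q m n r (s + 1) - gG e q m n r s = gT e q m n r s + gU e q m n r s := by
  have h1 := pascal e q he hq hD hint (m + (s : ℤ)) (n - (r : ℤ) + (s : ℤ) + 1)
  have h2 := pascal e q he hq hD hint (n - (r : ℤ) + (s : ℤ) - 1) ((s : ℤ))
  have x12 := (zpow_add₀ (hP0 e q he hq) (m + (s : ℤ) + 1 - (n - (r : ℤ) + (s : ℤ) + 1))
    (n - (r : ℤ) + (s : ℤ) - 1 + 1 - (s : ℤ))).symm
  have mc1 : (e * q) ^ (n - (r : ℤ) + m * ((r : ℤ) + ((s : ℤ) + 1))) *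
      q ^ (-(n - (r : ℤ)) ^ 2 + m * (n - (r : ℤ)) + m * (r : ℤ) - 2 * m * ((s : ℤ) + 1)) *
      q ^ (-(n - (r : ℤ) + (s : ℤ) + 1))
      = (e * q) ^ (n - (r : ℤ) + m * ((r : ℤ) - (s : ℤ) - 1)) *
        q ^ ((n - (r : ℤ) + m * ((r : ℤ) - (s : ℤ) - 1)) +
          ((m - n + (r : ℤ) - 1) * (n - (r : ℤ) + (s : ℤ) + 1) + (n - (r : ℤ)) * (s : ℤ))) :=
    monoQ e q he hq _ _ _ _ _ (m * ((s : ℤ) + 1)) (by ring) (by ring)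
  have mc2 : (e * q) ^ (n - (r : ℤ) + m * ((r : ℤ) + ((s : ℤ) + 1))) *
      q ^ (-(n - (r : ℤ)) ^ 2 + m * (n - (r : ℤ)) + m * (r : ℤ) - 2 * m * ((s : ℤ) + 1)) *
      ((e * q) ^ (m + (s : ℤ) + 1 - (n - (r : ℤ) + (s : ℤ) + 1)) * q ^ (-(s : ℤ)))
      = (e * q) ^ (2 * (n - (r : ℤ) - 1) + m * ((r : ℤ) - (s : ℤ))) *
        q ^ (-3 * (n - (r : ℤ) - 1) + ((n - (r : ℤ) - 1 + m * ((r : ℤ) - (s : ℤ))) +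
          ((m - n + (r : ℤ)) * (n - (r : ℤ) + (s : ℤ)) + (n - (r : ℤ) - 1) * (s : ℤ)))) :=
    monoPQ e q he hq _ _ _ _ _ _ (m * ((s : ℤ) + 1) - (n - (r : ℤ) - 1)) (by ring) (by ring)
  have mc3 : (e * q) ^ (n - (r : ℤ) + m * ((r : ℤ) + ((s : ℤ) + 1))) *
      q ^ (-(n - (r : ℤ)) ^ 2 + m * (n - (r : ℤ)) + m * (r : ℤ) - 2 * m * ((s : ℤ) + 1)) *
      (e * q) ^ ((m + (s : ℤ) + 1 - (n - (r : ℤ) + (s : ℤ) + 1)) +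
        (n - (r : ℤ) + (s : ℤ) - 1 + 1 - (s : ℤ)))
      = (e * q) ^ (n - (r : ℤ) + m * ((r : ℤ) + (s : ℤ))) *
        q ^ (-(n - (r : ℤ)) ^ 2 + m * (n - (r : ℤ)) + m * (r : ℤ) - 2 * m * (s : ℤ)) :=
    monoPP e q he hq _ _ _ _ _ m (by ring) (by ring)
  simp only [gG, gT, gU]
  push_cast
  linear_combination (norm := ring_nf)
    ((e * q) ^ (n - (r : ℤ) + m * ((r : ℤ) + ((s : ℤ) + 1))) *
      q ^ (-(n - (r : ℤ)) ^ 2 + m * (n - (r : ℤ)) + m * (r : ℤ) - 2 * m * ((s : ℤ) + 1)) *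
      gbinom e q (n - (r : ℤ) + (s : ℤ) - 1 + 1) ((s : ℤ))) * h1 +
    ((e * q) ^ (n - (r : ℤ) + m * ((r : ℤ) + ((s : ℤ) + 1))) *
      q ^ (-(n - (r : ℤ)) ^ 2 + m * (n - (r : ℤ)) + m * (r : ℤ) - 2 * m * ((s : ℤ) + 1)) *
      (e * q) ^ (m + (s : ℤ) + 1 - (n - (r : ℤ) + (s : ℤ) + 1)) *
      gbinom e q (m + (s : ℤ)) (n - (r : ℤ) + (s : ℤ) + 1 - 1)) * h2 +
    (gbinom e q (m + (s : ℤ)) (n - (r : ℤ) + (s : ℤ) + 1) *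
      gbinom e q (n - (r : ℤ) + (s : ℤ) - 1 + 1) ((s : ℤ))) * mc1 +
    (gbinom e q (m + (s : ℤ)) (n - (r : ℤ) + (s : ℤ) + 1 - 1) *
      gbinom e q (n - (r : ℤ) + (s : ℤ) - 1) ((s : ℤ))) * mc2 +
    ((e * q) ^ (n - (r : ℤ) + m * ((r : ℤ) + ((s : ℤ) + 1))) *
      q ^ (-(n - (r : ℤ)) ^ 2 + m * (n - (r : ℤ)) + m * (r : ℤ) - 2 * m * ((s : ℤ) + 1)) *
      (gbinom e q (m + (s : ℤ)) (n - (r : ℤ) + (s : ℤ) + 1 - 1) *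
        gbinom e q (n - (r : ℤ) + (s : ℤ) - 1) ((s : ℤ) - 1))) * x12 +
    ((gbinom e q (m + (s : ℤ)) (n - (r : ℤ) + (s : ℤ) + 1 - 1) *
        gbinom e q (n - (r : ℤ) + (s : ℤ) - 1) ((s : ℤ) - 1))) * mc3

include he hq hD hint in
lemma stepII (m n : ℤ) (r : ℕ) :
    gG e q m n r r + gU e q m n r r
      = q ^ ((m - n + (r : ℤ)) * n + (n - (r : ℤ)) * (r : ℤ)) *
        (gbinom e q (m + (r : ℤ)) n * gbinom e q n (r : ℤ)) := by
  have h3 := pascal e q he hq hD hint (n - 1) ((r : ℤ))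
  have mc4 : q ^ ((m - n + (r : ℤ)) * n + (n - (r : ℤ)) * (r : ℤ)) * q ^ (-(r : ℤ))
      = (e * q) ^ (2 * (n - (r : ℤ) - 1) + m * ((r : ℤ) - (r : ℤ))) *
        q ^ (-3 * (n - (r : ℤ) - 1) + ((n - (r : ℤ) - 1 + m * ((r : ℤ) - (r : ℤ))) +
          ((m - n + (r : ℤ)) * (n - (r : ℤ) + (r : ℤ)) + (n - (r : ℤ) - 1) * (r : ℤ)))) :=
    monoQQ e q he hq _ _ _ _ (-(n - (r : ℤ) - 1)) (by ring) (by ring)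
  have mc5 : q ^ ((m - n + (r : ℤ)) * n + (n - (r : ℤ)) * (r : ℤ)) * (e * q) ^ (n - 1 + 1 - (r : ℤ))
      = (e * q) ^ (n - (r : ℤ) + m * ((r : ℤ) + (r : ℤ))) *
        q ^ (-(n - (r : ℤ)) ^ 2 + m * (n - (r : ℤ)) + m * (r : ℤ) - 2 * m * (r : ℤ)) :=
    monoQP e q he hq _ _ _ _ (-(m * (r : ℤ))) (by ring) (by ring)
  simp only [gG, gU]
  linear_combination (norm := ring_nf)
    (-(q ^ ((m - n + (r : ℤ)) * n + (n - (r : ℤ)) * (r : ℤ)) *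
      gbinom e q (m + (r : ℤ)) n)) * h3 +
    (-(gbinom e q (m + (r : ℤ)) n * gbinom e q (n - 1) ((r : ℤ)))) * mc4 +
    (-(gbinom e q (m + (r : ℤ)) n * gbinom e q (n - 1) ((r : ℤ) - 1))) * mc5

include he hq hD hint in
theorem gen (m n : ℤ) (r : ℕ) :
    gc e q m n r = gb e q m n r + gb e q m n (r + 1) := by
  rw [hb1 e q he hq m n r, hb2 e q he hq m n r, Finset.sum_range_succ]
  have htel : (∑ s ∈ Finset.range r, gT e q m n r s) + ∑ s ∈ Finset.range r, gU e q m n r s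
      = gG e q m n r r := by
    rw [← Finset.sum_add_distrib,
      show gG e q m n r r = gG e q m n r r - gG e q m n r 0 by rw [gG_zero]; ring,
      ← Finset.sum_range_sub (fun s => gG e q m n r s)]
    exact Finset.sum_congr rfl fun s _ => (stepI e q he hq hD hint m n r s).symm
  have h2 := stepII e q he hq hD hint m n r
  unfold gc
  linear_combination (norm := ring_nf)
    (-((e * q ^ (-2 : ℤ)) ^ ((n - (r : ℤ)) * (r : ℤ) + (r.choose 2 : ℤ)))) * htel +
    (-((e * q ^ (-2 : ℤ)) ^ ((n - (r : ℤ)) * (r : ℤ) + (r.choose 2 : ℤ)))) * h2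

end S7aux
section Transfer

/-- auxiliary nonvanishing: powers of `X` are not constants -/
lemma X_pow_ne_one (k : ℕ) (hk : k ≠ 0) : (RatFunc.X : RatFunc ℚ) ^ k ≠ 1 := by
  intro h
  have hinj := IsFractionRing.injective (Polynomial ℚ) (RatFunc ℚ)
  have h2 : (Polynomial.X : Polynomial ℚ) ^ k = 1 := by
    apply hinj
    rw [map_pow, map_one, RatFunc.algebraMap_X]
    exact h
  have h3 := congrArg Polynomial.natDegree h2
  rw [Polynomial.natDegree_X_pow, Polynomial.natDegree_one] at h3
  exact hk h3

lemma X_pow_ne_neg_one (k : ℕ) (hk : k ≠ 0) : (RatFunc.X : RatFunc ℚ) ^ k ≠ -1 := by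
  intro h
  have hinj := IsFractionRing.injective (Polynomial ℚ) (RatFunc ℚ)
  have h2 : (Polynomial.X : Polynomial ℚ) ^ k = -1 := by
    apply hinj
    rw [map_pow, map_neg, map_one, RatFunc.algebraMap_X]
    exact h
  have h3 := congrArg Polynomial.natDegree h2
  rw [Polynomial.natDegree_X_pow, Polynomial.natDegree_neg, Polynomial.natDegree_one] at h3
  exact hk h3

lemma num_ne (ε : RatFunc ℚ) (hε : ε = 1 ∨ ε = -1) (z : ℤ) (hz : 0 < z) :
    (ε * RatFunc.X) ^ z - RatFunc.X ^ (-z) ≠ 0 := by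
  intro h
  rw [sub_eq_zero] at h
  lift z to ℕ using hz.le with k hk
  have hk0 : k ≠ 0 := by omega
  rw [zpow_natCast] at h
  have h2 : (ε * RatFunc.X) ^ k * RatFunc.X ^ k = 1 := by
    rw [h, ← zpow_natCast (RatFunc.X : RatFunc ℚ) k, ← zpow_add₀ RatFunc.X_ne_zero]
    simp
  rw [mul_pow, mul_assoc, ← pow_add] at h2
  rcases hε with rfl | rfl
  · rw [one_pow, one_mul] at h2
    exact X_pow_ne_one (k + k) (by omega) h2
  · rcases Nat.even_or_odd k with hev | hod
    · rw [hev.neg_one_pow, one_mul] at h2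
      exact X_pow_ne_one (k + k) (by omega) h2
    · rw [hod.neg_one_pow, neg_one_mul] at h2
      exact X_pow_ne_neg_one (k + k) (by omega) (by linear_combination -h2)

lemma den_ne (ε : RatFunc ℚ) (hε : ε = 1 ∨ ε = -1) :
    ε * RatFunc.X - RatFunc.X ^ (-1 : ℤ) ≠ 0 := by
  have := num_ne ε hε 1 one_pos
  simpa [zpow_one] using this

lemma gint_ne (ε : RatFunc ℚ) (hε : ε = 1 ∨ ε = -1) (j : ℕ) :
    S7aux.gint ε RatFunc.X ((j : ℤ) + 1) ≠ 0 := by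
  unfold S7aux.gint
  apply div_ne_zero
  · exact num_ne ε hε _ (by positivity)
  · exact den_ne ε hε

-- componentwise lemmas
lemma fst_pow' (p : Rqpi) (k : ℕ) : (p ^ k).1 = p.1 ^ k := by
  induction k with
  | zero => simp
  | succ k ih => rw [pow_succ, pow_succ, Prod.fst_mul, ih]

lemma snd_pow' (p : Rqpi) (k : ℕ) : (p ^ k).2 = p.2 ^ k := by
  induction k with
  | zero => simp
  | succ k ih => rw [pow_succ, pow_succ, Prod.snd_mul, ih]

lemma fst_zpow' (p : Rqpi) (z : ℤ) : (p ^ z).1 = p.1 ^ z := by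
  cases z with
  | ofNat k => rw [Int.ofNat_eq_coe, zpow_natCast, zpow_natCast, fst_pow']
  | negSucc k => rw [zpow_negSucc, zpow_negSucc, Prod.fst_inv, fst_pow']

lemma snd_zpow' (p : Rqpi) (z : ℤ) : (p ^ z).2 = p.2 ^ z := by
  cases z with
  | ofNat k => rw [Int.ofNat_eq_coe, zpow_natCast, zpow_natCast, snd_pow']
  | negSucc k => rw [zpow_negSucc, zpow_negSucc, Prod.snd_inv, snd_pow']

lemma qint_fst (z : ℤ) : (qint z).1 = S7aux.gint (1 : RatFunc ℚ) RatFunc.X z := by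
  simp only [qint, S7aux.gint, Prod.fst_div, Prod.fst_sub, fst_zpow', Prod.fst_mul, qv, piv]

lemma qint_snd (z : ℤ) : (qint z).2 = S7aux.gint (-1 : RatFunc ℚ) RatFunc.X z := by
  simp only [qint, S7aux.gint, Prod.snd_div, Prod.snd_sub, snd_zpow', Prod.snd_mul, qv, piv]

lemma qfact_fst (k : ℕ) : (qfact k).1 = S7aux.gfact (1 : RatFunc ℚ) RatFunc.X k := by
  simp only [qfact, S7aux.gfact, Prod.fst_prod, qint_fst]

lemma qfact_snd (k : ℕ) : (qfact k).2 = S7aux.gfact (-1 : RatFunc ℚ) RatFunc.X k := by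
  simp only [qfact, S7aux.gfact, Prod.snd_prod, qint_snd]

lemma qbinom_fst (a b : ℤ) : (qbinom a b).1 = S7aux.gbinom (1 : RatFunc ℚ) RatFunc.X a b := by
  unfold qbinom S7aux.gbinom
  rw [apply_ite Prod.fst]
  split_ifs with h
  · simp
  · simp only [Prod.fst_div, Prod.fst_prod, qint_fst, qfact_fst]

lemma qbinom_snd (a b : ℤ) : (qbinom a b).2 = S7aux.gbinom (-1 : RatFunc ℚ) RatFunc.X a b := by
  unfold qbinom S7aux.gbinom
  rw [apply_ite Prod.snd]
  split_ifs with h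
  · simp
  · simp only [Prod.snd_div, Prod.snd_prod, qint_snd, qfact_snd]

lemma bCoeff_fst (m n : ℤ) (r : ℕ) :
    (bCoeff m n r).1 = S7aux.gb (1 : RatFunc ℚ) RatFunc.X m n r := by
  unfold bCoeff S7aux.gb
  simp only [Prod.fst_mul, fst_zpow', fst_pow', Prod.fst_sum, qbinom_fst, qv, piv]

lemma bCoeff_snd (m n : ℤ) (r : ℕ) :
    (bCoeff m n r).2 = S7aux.gb (-1 : RatFunc ℚ) RatFunc.X m n r := by
  unfold bCoeff S7aux.gb
  simp only [Prod.snd_mul, snd_zpow', snd_pow', Prod.snd_sum, qbinom_snd, qv, piv]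

lemma cCoeff_fst (m n : ℤ) (r : ℕ) :
    (cCoeff m n r).1 = S7aux.gc (1 : RatFunc ℚ) RatFunc.X m n r := by
  unfold cCoeff S7aux.gc
  simp only [Prod.fst_mul, fst_zpow', fst_pow', qbinom_fst, qv, piv]

lemma cCoeff_snd (m n : ℤ) (r : ℕ) :
    (cCoeff m n r).2 = S7aux.gc (-1 : RatFunc ℚ) RatFunc.X m n r := by
  unfold cCoeff S7aux.gc
  simp only [Prod.snd_mul, snd_zpow', snd_pow', qbinom_snd, qv, piv]

end Transfer

/-- `c_{m,n}(r) = b_{m,n}(r) + b_{m,n}(r+1)` for all `m, n ∈ ℤ` and `r ≥ 0`. -/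
theorem statement7 (m n : ℤ) (r : ℕ) : cCoeff m n r = bCoeff m n r + bCoeff m n (r + 1) := by
  apply Prod.ext
  · rw [Prod.fst_add, cCoeff_fst, bCoeff_fst, bCoeff_fst]
    exact S7aux.gen 1 RatFunc.X (by ring) RatFunc.X_ne_zero
      (by simpa using den_ne 1 (Or.inl rfl)) (gint_ne 1 (Or.inl rfl)) m n r
  · rw [Prod.snd_add, cCoeff_snd, bCoeff_snd, bCoeff_snd]
    exact S7aux.gen (-1) RatFunc.X (by ring) RatFunc.X_ne_zero
      (by simpa using den_ne (-1) (Or.inr rfl)) (gint_ne (-1) (Or.inr rfl)) m n r
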